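/- arXiv:2402.17067 — 2 statements merged into one kernel-verified Lean document; each statement's English description precedes it below -/
import Mathlib

section
/- Fix α > 0 and η > 0, and let (α_i)_{i≥ℓ} be a sequence of positive reals satisfying 1/α_{i+1} ≤ (1+α_i η)/(α_i (1+αη)²) + η/(1+αη) for all i ≥ ℓ. If α_ℓ ≥ α, then α_i ≥ α for all i ≥ ℓ; if α_ℓ < α, then α_i ≥ α_ℓ for all i ≥ ℓ. In either case α_i ≥ min{α, α_ℓ} for all i ≥ ℓ. -/
/-- evolution of the Φ-Sobolev constant along the Proximal Sampler.
Fix `α > 0`, `η > 0`, and a sequence of positive reals `(α_i)_{i ≥ ℓ}` satisfying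
`1/α_{i+1} ≤ (1 + α_i η)/(α_i (1+αη)²) + η/(1+αη)` for all `i ≥ ℓ`.
If `α_ℓ ≥ α` then `α_i ≥ α` for all `i ≥ ℓ`; if `α_ℓ < α` then `α_i ≥ α_ℓ` for all
`i ≥ ℓ`. In either case `α_i ≥ min α α_ℓ` for all `i ≥ ℓ`. -/
theorem proximal_sampler_phi_sobolev_recursion
    (α η : ℝ) (hα : 0 < α) (hη : 0 < η)
    (ℓ : ℕ) (a : ℕ → ℝ) (ha : ∀ i, 0 < a i)
    (hrec : ∀ i, ℓ ≤ i →
      1 / a (i + 1) ≤ (1 + a i * η) / (a i * (1 + α * η) ^ 2) + η / (1 + α * η)) :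
    (α ≤ a ℓ → ∀ i, ℓ ≤ i → α ≤ a i) ∧
    (a ℓ < α → ∀ i, ℓ ≤ i → a ℓ ≤ a i) ∧
    (∀ i, ℓ ≤ i → min α (a ℓ) ≤ a i) := by
  have hC : (0:ℝ) < 1 + α * η := by positivity
  have key : ∀ β : ℝ, 0 < β → β ≤ α → β ≤ a ℓ → ∀ i, ℓ ≤ i → β ≤ a i := by
    intro β hβ hβα hβℓ i hi
    induction i, hi using Nat.le_induction with
    | base => exact hβℓ
    | succ n hn ih =>
      have hCβ : (0:ℝ) < 1 + β * η := by positivity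
      have han : (0:ℝ) < a n := ha n
      have h1 : 1 / a (n + 1) ≤ 1 / β := by
        calc 1 / a (n + 1)
            ≤ (1 + a n * η) / (a n * (1 + α * η) ^ 2) + η / (1 + α * η) := hrec n hn
          _ = (1 / a n + η) / (1 + α * η) ^ 2 + η / (1 + α * η) := by
              field_simp
          _ ≤ (1 / β + η) / (1 + α * η) ^ 2 + η / (1 + α * η) := by
              gcongr
          _ ≤ (1 / β + η) / (1 + β * η) ^ 2 + η / (1 + β * η) := by
              gcongr (1 / β + η) / ?_ + η / ?_ <;> nlinarith [mul_le_mul hβα hβα hβ.le hα.le, mul_pos hη hη, sq_nonneg η]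
          _ = 1 / β := by field_simp
      exact le_of_one_div_le_one_div (ha (n + 1)) h1
  refine ⟨fun h => key α hα le_rfl h, fun h => key (a ℓ) (ha ℓ) h.le le_rfl, ?_⟩
  exact key (min α (a ℓ)) (lt_min hα (ha ℓ)) (min_le_left _ _) (min_le_right _ _)
end

section
/- Let α > 0, T > 0, α₀ > 0, and for t ∈ [0,T] define A_t = ∫₀^t [α₀(1+αT)²] / [(1+α(T−s))² + α₀ s (1+α(T−s))(1+αT)] ds. Then A_t = log[((1+αT)(1+α₀t) − αt) / (1+αT−αt)]. Consequently e^{−A_t} = (1+αT−αt)/((1+αT)(1+α₀t)−αt). -/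
open intervalIntegral

/-- the Grönwall integral along the backward heat flow step of the
Proximal Sampler. For `α, T, α₀ > 0` and `t ∈ [0,T]`, with
`A t = ∫₀^t α₀(1+αT)² / ((1+α(T−s))² + α₀ s (1+α(T−s))(1+αT)) ds`, we have
`A t = log (((1+αT)(1+α₀t) − αt)/(1+αT−αt))` and consequently
`exp (−A t) = (1+αT−αt)/((1+αT)(1+α₀t)−αt)`. -/
theorem backward_heat_flow_gronwall_integral
    (α T α₀ : ℝ) (hα : 0 < α) (hT : 0 < T) (hα₀ : 0 < α₀)
    (t : ℝ) (ht0 : 0 ≤ t) (htT : t ≤ T) :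
    (∫ s in (0 : ℝ)..t,
        α₀ * (1 + α * T) ^ 2 /
          ((1 + α * (T - s)) ^ 2 + α₀ * s * (1 + α * (T - s)) * (1 + α * T)))
      = Real.log (((1 + α * T) * (1 + α₀ * t) - α * t) / (1 + α * T - α * t)) ∧
    Real.exp (-(∫ s in (0 : ℝ)..t,
        α₀ * (1 + α * T) ^ 2 /
          ((1 + α * (T - s)) ^ 2 + α₀ * s * (1 + α * (T - s)) * (1 + α * T))))
      = (1 + α * T - α * t) / ((1 + α * T) * (1 + α₀ * t) - α * t) := by
  have hupos : ∀ s ∈ Set.uIcc (0:ℝ) t, 0 < 1 + α * T - α * s := by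
    intro s hs
    rw [Set.uIcc_of_le ht0] at hs
    have h1 : s ≤ T := le_trans hs.2 htT
    nlinarith [mul_le_mul_of_nonneg_left h1 hα.le]
  have hvpos : ∀ s ∈ Set.uIcc (0:ℝ) t,
      0 < (1 + α * T) * (1 + α₀ * s) - α * s := by
    intro s hs
    have hu := hupos s hs
    rw [Set.uIcc_of_le ht0] at hs
    have hs0 : 0 ≤ s := hs.1
    have : 0 ≤ α₀ * s * (1 + α * T) := by positivity
    nlinarith
  have hDfac : ∀ s : ℝ,
      (1 + α * (T - s)) ^ 2 + α₀ * s * (1 + α * (T - s)) * (1 + α * T)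
        = (1 + α * T - α * s) * ((1 + α * T) * (1 + α₀ * s) - α * s) := by
    intro s; ring
  have hDpos : ∀ s ∈ Set.uIcc (0:ℝ) t,
      0 < (1 + α * (T - s)) ^ 2 + α₀ * s * (1 + α * (T - s)) * (1 + α * T) := by
    intro s hs
    rw [hDfac s]
    exact mul_pos (hupos s hs) (hvpos s hs)
  have key : ∀ s ∈ Set.uIcc (0:ℝ) t,
      HasDerivAt (fun s => Real.log ((1 + α * T) * (1 + α₀ * s) - α * s)
          - Real.log (1 + α * T - α * s))
        (α₀ * (1 + α * T) ^ 2 /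
          ((1 + α * (T - s)) ^ 2 + α₀ * s * (1 + α * (T - s)) * (1 + α * T))) s := by
    intro s hs
    have hus := hupos s hs
    have hvs := hvpos s hs
    have hdu : HasDerivAt (fun x : ℝ => 1 + α * T - α * x) (-α) s := by
      simpa using ((hasDerivAt_id s).const_mul α).const_sub (1 + α * T)
    have hdv : HasDerivAt (fun x : ℝ => (1 + α * T) * (1 + α₀ * x) - α * x)
        ((1 + α * T) * α₀ - α) s := by
      have h1 : HasDerivAt (fun x : ℝ => (1 + α * T) * (1 + α₀ * x))
          ((1 + α * T) * α₀) s := by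
        simpa using (((hasDerivAt_id s).const_mul α₀).const_add 1).const_mul (1 + α * T)
      have h2 := h1.sub ((hasDerivAt_id s).const_mul α)
      simp only [mul_one] at h2
      exact h2
    have hd := (hdv.log hvs.ne').sub (hdu.log hus.ne')
    refine hd.congr_deriv ?_
    rw [hDfac s]
    field_simp
    ring
  have hint : IntervalIntegrable (fun s =>
      α₀ * (1 + α * T) ^ 2 /
        ((1 + α * (T - s)) ^ 2 + α₀ * s * (1 + α * (T - s)) * (1 + α * T)))
      MeasureTheory.volume 0 t := by
    apply ContinuousOn.intervalIntegrable
    apply ContinuousOn.div continuousOn_const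
    · exact (Continuous.continuousOn (by continuity))
    · exact fun s hs => (hDpos s hs).ne'
  have hFTC := intervalIntegral.integral_eq_sub_of_hasDerivAt key hint
  have hut := hupos t (Set.right_mem_uIcc)
  have hvt := hvpos t (Set.right_mem_uIcc)
  have hA : (∫ s in (0 : ℝ)..t,
        α₀ * (1 + α * T) ^ 2 /
          ((1 + α * (T - s)) ^ 2 + α₀ * s * (1 + α * (T - s)) * (1 + α * T)))
      = Real.log (((1 + α * T) * (1 + α₀ * t) - α * t) / (1 + α * T - α * t)) := by
    rw [hFTC, Real.log_div hvt.ne' hut.ne']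
    norm_num
  refine ⟨hA, ?_⟩
  rw [hA, ← Real.log_inv, Real.exp_log (by positivity), inv_div]
end
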